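/- Abrupt revelation is optimal with a more patient agent and common priors: assume δ_P > δ_A > 0 and μ_P = μ_A = μ ∈ (0,1) (so ℓ = 1), and let t* = (1/δ_A)·log(v(1)/v(μ)). Then the pair G_1*(t) = μ·𝟙{t < t*}, G_0*(t) = (1-μ)·𝟙{t < t*} is feasible for the engagement problem (P), and every feasible pair (G_1,G_0) satisfies J(G_1,G_0) ≤ J(G_1*,G_0*) = (1 - (v(μ)/v(1))^{δ_P/δ_A})/δ_P. -/

import Mathlib

open MeasureTheory Set
open scoped Classical

noncomputable section

/-- The principal's objective in the engagement problem (P). -/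
def J (δP : ℝ) (G1 G0 : ℝ → ℝ) : ℝ :=
  ∫ t in Ioi (0:ℝ), Real.exp (-δP * t) * (G1 t + G0 t)

/-- Feasibility for the engagement problem (P): `G1` and `G0` are nonnegative and
nonincreasing engagement probability functions with the given initial conditions,
satisfying the agent's obedience constraint at every time `t ≥ 0`. -/
def Feasible (v : ℝ → ℝ) (δA ℓ μP : ℝ) (G1 G0 : ℝ → ℝ) : Prop :=
  (∀ t, 0 ≤ t → 0 ≤ G1 t) ∧ (∀ t, 0 ≤ t → 0 ≤ G0 t) ∧
  (∀ s t, 0 ≤ s → s ≤ t → G1 t ≤ G1 s) ∧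
  (∀ s t, 0 ≤ s → s ≤ t → G0 t ≤ G0 s) ∧
  G1 0 = μP ∧ G0 0 = 1 - μP ∧
  (∀ t, 0 ≤ t → 0 < ℓ * G1 t + G0 t →
    v 1 * (ℓ * G1 t + G0 t)
        - δA * v 1 * ∫ s in Ioi t, (ℓ * G1 s + G0 s) * Real.exp (-δA * (s - t))
      ≥ (ℓ * G1 t + G0 t) * v (ℓ * G1 t / (ℓ * G1 t + G0 t)))

/-- **Abrupt revelation is optimal with a more patient agent and common priors.**
If `δP > δA > 0` and the priors agree (`μP = μA = μ`, so `ℓ = 1`), then full revelation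
at `t* = (1/δA) log (v 1 / v μ)` is feasible and optimal for the engagement problem,
with value `(1 - (v μ / v 1)^(δP/δA)) / δP`. -/
lemma chi_integral {c a b : ℝ} (hc : 0 < c) (hab : a ≤ b) :
    ∫ s in Ioi a, (if s < b then (1:ℝ) else 0) * Real.exp (-c * s)
      = (Real.exp (-c * a) - Real.exp (-c * b)) / c := by
  have h1 : (fun s => (if s < b then (1:ℝ) else 0) * Real.exp (-c*s))
      = (Iio b).indicator (fun s => Real.exp (-c*s)) := by
    funext s; by_cases h : s < b <;> simp [indicator, h]
  rw [h1, integral_indicator measurableSet_Iio,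
    Measure.restrict_restrict measurableSet_Iio]
  have h2 : Iio b ∩ Ioi a = Ioo a b := by ext x; simp [Ioo, and_comm]
  rw [h2, ← integral_Ioc_eq_integral_Ioo, ← intervalIntegral.integral_of_le hab]
  have h3 := intervalIntegral.mul_integral_comp_mul_left (f := Real.exp)
    (c := -c) (a := a) (b := b)
  rw [integral_exp] at h3
  have hc' : c ≠ 0 := ne_of_gt hc
  field_simp at h3 ⊢
  nlinarith [h3]

lemma chi_integrable {c : ℝ} (a b : ℝ) (hc : 0 < c) :
    IntegrableOn (fun s => (if s < b then (1:ℝ) else 0) * Real.exp (-c*s)) (Ioi a) := by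
  have h1 : (fun s => (if s < b then (1:ℝ) else 0) * Real.exp (-c*s))
      = (Iio b).indicator (fun s => Real.exp (-c*s)) := by
    funext s; by_cases h : s < b <;> simp [indicator, h]
  rw [h1]
  exact (exp_neg_integrableOn_Ioi a hc).indicator measurableSet_Iio

lemma bdd_integrable {c a : ℝ} (hc : 0 < c) {f : ℝ → ℝ}
    (hm : AEMeasurable f (volume.restrict (Ioi a)))
    (h0 : ∀ t ∈ Ioi a, 0 ≤ f t) (h1 : ∀ t ∈ Ioi a, f t ≤ 1) :
    IntegrableOn (fun t => f t * Real.exp (-c * t)) (Ioi a) := by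
  apply Integrable.mono' (exp_neg_integrableOn_Ioi a hc)
  · exact (hm.mul ((Real.measurable_exp.comp
      (measurable_id.const_mul (-c))).aemeasurable)).aestronglyMeasurable
  · filter_upwards [ae_restrict_mem measurableSet_Ioi] with t ht
    have := h0 t ht; have := h1 t ht
    rw [Real.norm_eq_abs, abs_mul, abs_of_nonneg ‹0 ≤ f t›,
      abs_of_nonneg (Real.exp_pos _).le]
    nlinarith [Real.exp_pos (-c*t)]

theorem abrupt_revelation_optimal
    (v : ℝ → ℝ) (δA δP μ : ℝ)
    (hδA : 0 < δA) (hδ : δA < δP)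
    (hμ : μ ∈ Ioo (0:ℝ) 1)
    (hconv : StrictConvexOn ℝ (Icc (0:ℝ) 1) v)
    (hdiff : DifferentiableOn ℝ v (Icc (0:ℝ) 1))
    (hpos : ∀ x ∈ Icc (0:ℝ) 1, 0 < v x)
    (hsymm : ∀ x ∈ Icc (0:ℝ) 1, v x = v (1 - x)) :
    let tstar : ℝ := (1 / δA) * Real.log (v 1 / v μ)
    let G1s : ℝ → ℝ := fun t => if t < tstar then μ else 0
    let G0s : ℝ → ℝ := fun t => if t < tstar then 1 - μ else 0
    Feasible v δA 1 μ G1s G0s ∧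
    (∀ G1 G0, Feasible v δA 1 μ G1 G0 → J δP G1 G0 ≤ J δP G1s G0s) ∧
    J δP G1s G0s = (1 - (v μ / v 1) ^ (δP / δA)) / δP := by
  intro tstar G1s G0s
  obtain ⟨hμ0, hμ1⟩ := hμ
  have hδP : 0 < δP := lt_trans hδA hδ
  have hv1 : 0 < v 1 := hpos 1 ⟨zero_le_one, le_rfl⟩
  have hvμ : 0 < v μ := hpos μ ⟨hμ0.le, hμ1.le⟩
  have hv01 : v 0 = v 1 := by simpa using hsymm 0 ⟨le_rfl, zero_le_one⟩
  have hvlt : v μ < v 1 := by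
    have h := hconv.2 (show (0:ℝ) ∈ Icc (0:ℝ) 1 from ⟨le_rfl, zero_le_one⟩)
      (show (1:ℝ) ∈ Icc (0:ℝ) 1 from ⟨zero_le_one, le_rfl⟩) (by norm_num)
      (show (0:ℝ) < 1 - μ by linarith) hμ0 (by ring)
    simp only [smul_eq_mul, mul_zero, mul_one, zero_add] at h
    rw [hv01] at h; linarith
  have htstar : tstar = (1 / δA) * Real.log (v 1 / v μ) := rfl
  have hG1s : ∀ t, G1s t = if t < tstar then μ else 0 := fun _ => rfl
  have hG0s : ∀ t, G0s t = if t < tstar then 1 - μ else 0 := fun _ => rfl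
  have ht0 : 0 < tstar := by
    rw [htstar]
    have h1 : 1 < v 1 / v μ := (one_lt_div hvμ).mpr hvlt
    exact mul_pos (by positivity) (Real.log_pos h1)
  have hrat : Real.exp (-δA * tstar) = v μ / v 1 := by
    rw [htstar, show -δA * ((1/δA) * Real.log (v 1 / v μ)) = -Real.log (v 1 / v μ) by
      field_simp, Real.exp_neg, Real.exp_log (by positivity), inv_div]
  have hexpP : Real.exp (-δP * tstar) = (v μ / v 1) ^ (δP / δA) := by
    rw [Real.rpow_def_of_pos (by positivity), htstar,
      Real.log_div (ne_of_gt hvμ) (ne_of_gt hv1), Real.log_div (ne_of_gt hv1) (ne_of_gt hvμ)]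
    congr 1
    field_simp
    ring
  -- value of candidate objective
  have hJs : J δP G1s G0s = (1 - Real.exp (-δP * tstar)) / δP := by
    unfold J
    have h : (fun t => Real.exp (-δP*t) * (G1s t + G0s t))
        = fun t => (if t < tstar then (1:ℝ) else 0) * Real.exp (-δP*t) := by
      funext t; rw [hG1s, hG0s]; split_ifs <;> ring
    rw [h, chi_integral hδP ht0.le, show -δP * (0:ℝ) = 0 by ring, Real.exp_zero]
  refine ⟨?_, ?_, ?_⟩
  · -- Feasibility
    refine ⟨?_, ?_, ?_, ?_, ?_, ?_, ?_⟩
    · intro t _; rw [hG1s]; split_ifs; exacts [hμ0.le, le_rfl]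
    · intro t _; rw [hG0s]; split_ifs
      · linarith
      · exact le_rfl
    · intro s t hs hst; rw [hG1s, hG1s]; split_ifs with h h'
      · exact le_rfl
      · exact absurd (lt_of_le_of_lt hst h) h'
      · exact hμ0.le
      · exact le_rfl
    · intro s t hs hst; rw [hG0s, hG0s]; split_ifs with h h'
      · exact le_rfl
      · exact absurd (lt_of_le_of_lt hst h) h'
      · linarith
      · exact le_rfl
    · rw [hG1s, if_pos ht0]
    · rw [hG0s, if_pos ht0]
    · intro t ht hposA
      have htlt : t < tstar := by
        by_contra h
        rw [hG1s, hG0s, if_neg h, if_neg h] at hposA; norm_num at hposA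
      have e1 : (1:ℝ) * G1s t + G0s t = 1 := by
        rw [hG1s, hG0s, if_pos htlt, if_pos htlt]; ring
      have e2 : (1:ℝ) * G1s t / 1 = μ := by
        rw [hG1s, if_pos htlt]; ring
      rw [ge_iff_le, e1, e2]
      have e3 : (fun s => ((1:ℝ) * G1s s + G0s s) * Real.exp (-δA * (s - t)))
          = fun s => Real.exp (δA * t) * ((if s < tstar then (1:ℝ) else 0) * Real.exp (-δA * s)) := by
        funext s
        have hx : Real.exp (-δA * (s - t)) = Real.exp (δA * t) * Real.exp (-δA * s) := by
          rw [← Real.exp_add]; ring_nf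
        rw [hG1s, hG0s, hx]; split_ifs <;> ring
      rw [e3, integral_const_mul, chi_integral hδA htlt.le]
      have h4 : Real.exp (δA*t) * Real.exp (-δA*t) = 1 := by
        rw [← Real.exp_add]; simp
      have h5 : v μ ≤ v 1 * (Real.exp (δA*t) * Real.exp (-δA*tstar)) := by
        have h6 : Real.exp (-δA*tstar) ≤ Real.exp (δA*t) * Real.exp (-δA*tstar) :=
          le_mul_of_one_le_left (Real.exp_pos _).le
            (Real.one_le_exp (by positivity))
        calc v μ = v 1 * (v μ / v 1) := by field_simp
          _ = v 1 * Real.exp (-δA*tstar) := by rw [hrat]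
          _ ≤ _ := by nlinarith
      have h7 : δA * v 1 * (Real.exp (δA*t) *
            ((Real.exp (-δA*t) - Real.exp (-δA*tstar)) / δA))
          = v 1 * (Real.exp (δA*t) * Real.exp (-δA*t))
            - v 1 * (Real.exp (δA*t) * Real.exp (-δA*tstar)) := by
        field_simp
      rw [h7, h4]
      linarith
  · -- Optimality
    rintro G1 G0 ⟨h1n, h0n, h1a, h0a, h10, h00, hob⟩
    have hub : ∀ t ∈ Ioi (0:ℝ), G1 t + G0 t ≤ 1 := by
      intro t ht
      have := h1a 0 t le_rfl (le_of_lt ht)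
      have := h0a 0 t le_rfl (le_of_lt ht)
      rw [h10] at *; rw [h00] at *
      linarith
    have hnn : ∀ t ∈ Ioi (0:ℝ), 0 ≤ G1 t + G0 t := fun t ht =>
      add_nonneg (h1n t (le_of_lt ht)) (h0n t (le_of_lt ht))
    have hm : AEMeasurable (fun t => G1 t + G0 t) (volume.restrict (Ioi (0:ℝ))) := by
      have m1 : AEMeasurable G1 (volume.restrict (Ioi (0:ℝ))) :=
        aemeasurable_restrict_of_antitoneOn measurableSet_Ioi
          (fun s hs t _ hst => h1a s t (le_of_lt hs) hst)
      have m0 : AEMeasurable G0 (volume.restrict (Ioi (0:ℝ))) :=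
        aemeasurable_restrict_of_antitoneOn measurableSet_Ioi
          (fun s hs t _ hst => h0a s t (le_of_lt hs) hst)
      exact m1.add m0
    have hIA : IntegrableOn (fun t => (G1 t + G0 t) * Real.exp (-δA * t)) (Ioi 0) :=
      bdd_integrable hδA hm hnn hub
    have hIP : IntegrableOn (fun t => (G1 t + G0 t) * Real.exp (-δP * t)) (Ioi 0) :=
      bdd_integrable hδP hm hnn hub
    have hchiIA := chi_integrable (c := δA) 0 tstar hδA
    have hchiIP := chi_integrable (c := δP) 0 tstar hδP
    -- obedience at 0
    have hob0 := hob 0 le_rfl (by rw [h10, h00]; norm_num)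
    rw [h10, h00] at hob0
    simp only [one_mul, sub_zero] at hob0
    rw [show μ + (1 - μ) = 1 by ring] at hob0
    rw [show μ / (1:ℝ) = μ by ring] at hob0
    set I := ∫ s in Ioi (0:ℝ), (G1 s + G0 s) * Real.exp (-δA * s) with hIdef
    have hkey : δA * v 1 * I ≤ v 1 - v μ := by
      rw [ge_iff_le] at hob0; linarith
    set C : ℝ := (1 - Real.exp (-δA * tstar)) / δA with hCdef
    have hC : ∫ s in Ioi (0:ℝ), (if s < tstar then (1:ℝ) else 0) * Real.exp (-δA * s) = C := by
      rw [chi_integral hδA ht0.le, show -δA * (0:ℝ) = 0 by ring, Real.exp_zero]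
    have hIC : I ≤ C := by
      rw [hCdef, hrat, le_div_iff₀ hδA, ← mul_le_mul_iff_of_pos_right hv1,
        show (1 - v μ / v 1) * v 1 = v 1 - v μ by field_simp]
      nlinarith
    set K : ℝ := Real.exp (-(δP - δA) * tstar) with hKdef
    have hpt : ∀ t ∈ Ioi (0:ℝ),
        (G1 t + G0 t) * Real.exp (-δP*t) - (if t < tstar then (1:ℝ) else 0) * Real.exp (-δP*t)
          ≤ K * ((G1 t + G0 t) * Real.exp (-δA*t)
              - (if t < tstar then (1:ℝ) else 0) * Real.exp (-δA*t)) := by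
      intro t ht
      have hsplit : Real.exp (-δP*t) = Real.exp (-δA*t) * Real.exp (-(δP-δA)*t) := by
        rw [← Real.exp_add]; ring_nf
      by_cases h : t < tstar
      · rw [if_pos h]
        have ha : G1 t + G0 t - 1 ≤ 0 := by linarith [hub t ht]
        have hx : K ≤ Real.exp (-(δP-δA)*t) := by
          rw [hKdef]; apply Real.exp_le_exp.mpr; nlinarith
        have ha' : (G1 t + G0 t - 1) * Real.exp (-δA*t) ≤ 0 :=
          mul_nonpos_of_nonpos_of_nonneg ha (Real.exp_pos _).le
        have hmm := mul_le_mul_of_nonpos_left hx ha'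
        calc (G1 t + G0 t) * Real.exp (-δP*t) - 1 * Real.exp (-δP*t)
            = (G1 t + G0 t - 1) * Real.exp (-δA*t) * Real.exp (-(δP-δA)*t) := by
              rw [hsplit]; ring
          _ ≤ (G1 t + G0 t - 1) * Real.exp (-δA*t) * K := by linarith [hmm]
          _ = K * ((G1 t + G0 t) * Real.exp (-δA*t) - 1 * Real.exp (-δA*t)) := by ring
      · rw [if_neg h]; push_neg at h
        have ha' : 0 ≤ (G1 t + G0 t) * Real.exp (-δA*t) :=
          mul_nonneg (hnn t ht) (Real.exp_pos _).le
        have hx : Real.exp (-(δP-δA)*t) ≤ K := by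
          rw [hKdef]; apply Real.exp_le_exp.mpr; nlinarith
        calc (G1 t + G0 t) * Real.exp (-δP*t) - 0 * Real.exp (-δP*t)
            = (G1 t + G0 t) * Real.exp (-δA*t) * Real.exp (-(δP-δA)*t) := by
              rw [hsplit]; ring
          _ ≤ (G1 t + G0 t) * Real.exp (-δA*t) * K :=
              mul_le_mul_of_nonneg_left hx ha'
          _ = K * ((G1 t + G0 t) * Real.exp (-δA*t) - 0 * Real.exp (-δA*t)) := by ring
    have hint := setIntegral_mono_on (hIP.sub hchiIP) ((hIA.sub hchiIA).const_mul K)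
      measurableSet_Ioi hpt
    simp only [Pi.sub_apply] at hint
    rw [integral_sub hIP hchiIP, integral_const_mul, integral_sub hIA hchiIA] at hint
    rw [hC, ← hIdef] at hint
    have hK0 : 0 < K := Real.exp_pos _
    have hKle : K * (I - C) ≤ 0 := mul_nonpos_of_nonneg_of_nonpos hK0.le (by linarith)
    have hfin : (∫ t in Ioi (0:ℝ), (G1 t + G0 t) * Real.exp (-δP * t))
        ≤ ∫ t in Ioi (0:ℝ), (if t < tstar then (1:ℝ) else 0) * Real.exp (-δP * t) := by
      linarith
    have hJ1 : J δP G1 G0 = ∫ t in Ioi (0:ℝ), (G1 t + G0 t) * Real.exp (-δP * t) := by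
      unfold J; congr 1; funext t; ring
    have hJ2 : J δP G1s G0s
        = ∫ t in Ioi (0:ℝ), (if t < tstar then (1:ℝ) else 0) * Real.exp (-δP * t) := by
      unfold J; congr 1; funext t; rw [hG1s, hG0s]; split_ifs <;> ring
    rw [hJ1, hJ2]
    exact hfin
  · rw [hJs, hexpP]


end
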